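/- Let F : C → D be a weight-exact functor between triangulated categories with weight structures w, w'. Assume the induced functor on hearts HF : Hw → Hw' is full and that every endomorphism in Hw killed by HF is nilpotent. If, for some object M of C and integers m ≤ n, the object F(M) is without weights m,…,n with respect to w', then M is without weights m,…,n with respect to w. -/

import Mathlib

open CategoryTheory Limits Pretriangulated

structure WeightStructure (C : Type*) [Category C] [Preadditive C] [HasZeroObject C]
    [HasShift C ℤ] [∀ n : ℤ, (CategoryTheory.shiftFunctor C n).Additive] [Pretriangulated C] where
  le : Set C
  ge : Set C
  le_retract : ∀ ⦃X Y : C⦄, Y ∈ le → ∀ (i : X ⟶ Y) (r : Y ⟶ X), i ≫ r = 𝟙 X → X ∈ le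
  ge_retract : ∀ ⦃X Y : C⦄, Y ∈ ge → ∀ (i : X ⟶ Y) (r : Y ⟶ X), i ≫ r = 𝟙 X → X ∈ ge
  le_shift : ∀ ⦃X : C⦄, X ∈ le → X⟦(-1 : ℤ)⟧ ∈ le
  ge_shift : ∀ ⦃X : C⦄, X ∈ ge → X⟦(1 : ℤ)⟧ ∈ ge
  orth : ∀ ⦃X Y : C⦄, X ∈ le → Y ∈ ge → ∀ f : X ⟶ Y⟦(1 : ℤ)⟧, f = 0
  decomp : ∀ M : C, ∃ (L R : C) (f : L ⟶ M) (g : M ⟶ R) (δ : R ⟶ L⟦(1 : ℤ)⟧),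
    (Triangle.mk f g δ ∈ distTriang C) ∧ L ∈ le ∧ R⟦(-1 : ℤ)⟧ ∈ ge

namespace WeightStructure

variable {C : Type*} [Category C] [Preadditive C] [HasZeroObject C]
  [HasShift C ℤ] [∀ n : ℤ, (CategoryTheory.shiftFunctor C n).Additive] [Pretriangulated C]
  (w : WeightStructure C)

/-- The class `C_{w ≤ n} = C_{w≤0}[n]`. -/
def Le (n : ℤ) : Set C := {X | X⟦(-n)⟧ ∈ w.le}

/-- The class `C_{w ≥ n} = C_{w≥0}[n]`. -/
def Ge (n : ℤ) : Set C := {X | X⟦(-n)⟧ ∈ w.ge}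

/-- `f, g, δ` form a `k`-weight decomposition triangle of `M`. -/
def IsWeightDecomp (k : ℤ) {A M B : C} (f : A ⟶ M) (g : M ⟶ B) (δ : B ⟶ A⟦(1 : ℤ)⟧) : Prop :=
  (Triangle.mk f g δ ∈ distTriang C) ∧ A ∈ w.Le k ∧ B ∈ w.Ge (k + 1)

/-- `g : M ⟶ N` kills weights `m,…,n`. -/
def KillsWeights (m n : ℤ) {M N : C} (g : M ⟶ N) : Prop :=
  ∃ (A B A' B' : C) (a : A ⟶ M) (b : M ⟶ B) (δ : B ⟶ A⟦(1 : ℤ)⟧)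
    (a' : A' ⟶ N) (b' : N ⟶ B') (δ' : B' ⟶ A'⟦(1 : ℤ)⟧),
    w.IsWeightDecomp n a b δ ∧ w.IsWeightDecomp (m - 1) a' b' δ' ∧ a ≫ g ≫ b' = 0

/-- `M` is without weights `m,…,n`. -/
def WithoutWeights (m n : ℤ) (M : C) : Prop := w.KillsWeights m n (𝟙 M)




end WeightStructure

/-- Iterated composition of an endomorphism. -/
def compPow {C : Type*} [CategoryTheory.Category C] {X : C} (e : X ⟶ X) : ℕ → (X ⟶ X)
  | 0 => CategoryTheory.CategoryStruct.id X
  | (k + 1) => CategoryTheory.CategoryStruct.comp (compPow e k) e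

/-! ### Auxiliary material -/

section compPowLemmas

variable {C : Type*} [Category C]

lemma compPow_succ' {X : C} (e : X ⟶ X) (k : ℕ) :
    compPow e (k + 1) = compPow e k ≫ e := rfl

lemma compPow_map {D : Type*} [Category D] (F : C ⥤ D) {X : C} (e : X ⟶ X) :
    ∀ i, F.map (compPow e i) = compPow (F.map e) i
  | 0 => F.map_id X
  | (i + 1) => by rw [compPow_succ', compPow_succ', F.map_comp, compPow_map F e i]

lemma compPow_add {X : C} (e : X ⟶ X) (a : ℕ) :
    ∀ b : ℕ, compPow e (a + b) = compPow e a ≫ compPow e b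
  | 0 => by simpa [compPow] using rfl
  | (b + 1) => by
      rw [show a + (b+1) = (a+b)+1 by ring, compPow_succ', compPow_add e a b,
        compPow_succ', Category.assoc]

lemma compPow_zero_mor [Preadditive C] {X : C} (k : ℕ) :
    compPow (0 : X ⟶ X) (k + 1) = 0 := by
  rw [compPow_succ', Limits.comp_zero]

lemma compPow_two_mul {X : C} (e : X ⟶ X) :
    ∀ j : ℕ, compPow e (2 * j) = compPow (e ≫ e) j
  | 0 => rfl
  | (j + 1) => by
      rw [show 2 * (j+1) = 2*j + 2 by ring, compPow_add, compPow_two_mul e j, compPow_succ']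
      show compPow (e ≫ e) j ≫ ((𝟙 X ≫ e) ≫ e) = _
      rw [Category.id_comp]
      rfl

end compPowLemmas

namespace WeightStructure

section Basic

variable {C : Type*} [Category C] [Preadditive C] [HasZeroObject C]
  [HasShift C ℤ] [∀ n : ℤ, (CategoryTheory.shiftFunctor C n).Additive] [Pretriangulated C]
  (w : WeightStructure C)

lemma le_iso {X Y : C} (e : X ≅ Y) (h : X ∈ w.le) : Y ∈ w.le :=
  w.le_retract h e.inv e.hom e.inv_hom_id

lemma ge_iso {X Y : C} (e : X ≅ Y) (h : X ∈ w.ge) : Y ∈ w.ge :=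
  w.ge_retract h e.inv e.hom e.inv_hom_id

lemma mem_Le_iso {k : ℤ} {X Y : C} (e : X ≅ Y) (h : X ∈ w.Le k) : Y ∈ w.Le k :=
  w.le_iso ((shiftFunctor C (-k)).mapIso e) h

lemma mem_Ge_iso {k : ℤ} {X Y : C} (e : X ≅ Y) (h : X ∈ w.Ge k) : Y ∈ w.Ge k :=
  w.ge_iso ((shiftFunctor C (-k)).mapIso e) h

lemma mem_Le_retract {k : ℤ} {X Y : C} (hY : Y ∈ w.Le k) (i : X ⟶ Y) (r : Y ⟶ X)
    (hir : i ≫ r = 𝟙 X) : X ∈ w.Le k :=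
  w.le_retract hY (i⟦(-k)⟧') (r⟦(-k)⟧')
    (by rw [← CategoryTheory.Functor.map_comp, hir, CategoryTheory.Functor.map_id])

lemma mem_Ge_retract {k : ℤ} {X Y : C} (hY : Y ∈ w.Ge k) (i : X ⟶ Y) (r : Y ⟶ X)
    (hir : i ≫ r = 𝟙 X) : X ∈ w.Ge k :=
  w.ge_retract hY (i⟦(-k)⟧') (r⟦(-k)⟧')
    (by rw [← CategoryTheory.Functor.map_comp, hir, CategoryTheory.Functor.map_id])

/-- Upward shift of `Le` memberships. -/
lemma mem_Le_shift {k : ℤ} {X : C} (h : X ∈ w.Le k) (j : ℤ) : X⟦j⟧ ∈ w.Le (k + j) :=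
  w.le_iso ((shiftFunctorAdd' C j (-(k + j)) (-k) (by ring)).app X) h

lemma mem_Ge_shift {k : ℤ} {X : C} (h : X ∈ w.Ge k) (j : ℤ) : X⟦j⟧ ∈ w.Ge (k + j) :=
  w.ge_iso ((shiftFunctorAdd' C j (-(k + j)) (-k) (by ring)).app X) h

lemma le_shift_nat {Y : C} (h : Y ∈ w.le) : ∀ d : ℕ, Y⟦-(d : ℤ)⟧ ∈ w.le := by
  intro d
  induction d with
  | zero =>
      exact w.le_iso ((shiftFunctorZero' C (-((0:ℕ):ℤ)) (by norm_num)).symm.app Y) h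
  | succ d ih =>
      exact w.le_iso ((shiftFunctorAdd' C (-(d:ℤ)) (-1) (-((d + 1 : ℕ) : ℤ))
        (by push_cast; ring)).symm.app Y) (w.le_shift ih)

lemma ge_shift_nat {Y : C} (h : Y ∈ w.ge) : ∀ d : ℕ, Y⟦(d : ℤ)⟧ ∈ w.ge := by
  intro d
  induction d with
  | zero =>
      exact w.ge_iso ((shiftFunctorZero' C (((0:ℕ):ℤ)) (by norm_num)).symm.app Y) h
  | succ d ih =>
      exact w.ge_iso ((shiftFunctorAdd' C ((d:ℤ)) 1 (((d + 1 : ℕ) : ℤ))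
        (by push_cast; ring)).symm.app Y) (w.ge_shift ih)

lemma Le_mono {k k' : ℤ} (hk : k ≤ k') {X : C} (h : X ∈ w.Le k) : X ∈ w.Le k' := by
  have hd : ((k' - k).toNat : ℤ) = k' - k := Int.toNat_of_nonneg (by omega)
  have h1 : (X⟦-k⟧)⟦-((k' - k).toNat : ℤ)⟧ ∈ w.le := w.le_shift_nat h _
  exact w.le_iso ((shiftFunctorAdd' C (-k) (-((k' - k).toNat : ℤ)) (-k')
    (by rw [hd]; ring)).symm.app X) h1

lemma Ge_antimono {k k' : ℤ} (hk : k ≤ k') {X : C} (h : X ∈ w.Ge k') : X ∈ w.Ge k := by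
  have hd : ((k' - k).toNat : ℤ) = k' - k := Int.toNat_of_nonneg (by omega)
  have h1 : (X⟦-k'⟧)⟦((k' - k).toNat : ℤ)⟧ ∈ w.ge := w.ge_shift_nat h _
  exact w.ge_iso ((shiftFunctorAdd' C (-k') (((k' - k).toNat : ℤ)) (-k)
    (by rw [hd]; ring)).symm.app X) h1

/-- Orthogonality: there are no nonzero morphisms from `Le j` to `Ge i` when `j < i`. -/
lemma hom_zero {i j : ℤ} (hij : j < i) {X Y : C} (hX : X ∈ w.Le j) (hY : Y ∈ w.Ge i)
    (f : X ⟶ Y) : f = 0 := by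
  have hZ : Y⟦-(j+1)⟧ ∈ w.ge := w.Ge_antimono (by omega) hY
  have e : Y⟦-j⟧ ≅ (Y⟦-(j+1)⟧)⟦(1:ℤ)⟧ :=
    (shiftFunctorAdd' C (-(j+1)) 1 (-j) (by ring)).app Y
  have horth : f⟦-j⟧' ≫ e.hom = 0 := w.orth hX hZ _
  have h0 : f⟦-j⟧' = 0 := by
    have := horth
    rw [← Category.comp_id (f⟦-j⟧'), ← e.hom_inv_id, ← Category.assoc, horth, Limits.zero_comp]
  apply (shiftFunctor C (-j)).map_injective
  rw [h0, CategoryTheory.Functor.map_zero]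

/-- Weight decompositions exist at every level. -/
lemma decompAt (k : ℤ) (M : C) :
    ∃ (A B : C) (a : A ⟶ M) (b : M ⟶ B) (δ : B ⟶ A⟦(1:ℤ)⟧), w.IsWeightDecomp k a b δ := by
  obtain ⟨L, R, f, g, δ₀, hT, hL, hR⟩ := w.decomp (M⟦-k⟧)
  let T' : Triangle C := (Triangle.shiftFunctor C k).obj (Triangle.mk f g δ₀)
  have hT' : T' ∈ distTriang C := Pretriangulated.Triangle.shift_distinguished _ hT k
  have e : ((M⟦-k⟧)⟦k⟧ : C) ≅ M := (shiftFunctorCompIsoId C (-k) k (by ring)).app M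
  have hA : (L⟦k⟧ : C) ∈ w.Le k :=
    w.le_iso ((shiftFunctorCompIsoId C k (-k) (by ring)).symm.app L) hL
  have hB : (R⟦k⟧ : C) ∈ w.Ge (k + 1) :=
    w.ge_iso ((shiftFunctorAdd' C k (-(k+1)) (-1) (by ring)).app R) hR
  refine ⟨L⟦k⟧, R⟦k⟧, T'.mor₁ ≫ e.hom, e.inv ≫ T'.mor₂, T'.mor₃, ?_⟩
  refine ⟨isomorphic_distinguished _ hT' _ ?_, hA, hB⟩
  exact Triangle.isoMk _ _ (Iso.refl _) e.symm (Iso.refl _)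
    (by exact ((Category.assoc _ _ _).trans ((congrArg (fun t => T'.mor₁ ≫ t) e.hom_inv_id).trans
      ((Category.comp_id _).trans (Category.id_comp _).symm)) : (T'.mor₁ ≫ e.hom) ≫ e.inv = 𝟙 _ ≫ T'.mor₁))
    (by exact (by simp : (e.inv ≫ T'.mor₂) ≫ 𝟙 _ = e.inv ≫ T'.mor₂))
    (by exact (by simp : T'.mor₃ ≫ (shiftFunctor C 1).map (𝟙 _) = 𝟙 _ ≫ T'.mor₃))

/-- Extension-closedness of `Le k`. -/
lemma le_ext {k : ℤ} {T : Triangle C} (hT : T ∈ distTriang C)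
    (h₁ : T.obj₁ ∈ w.Le k) (h₃ : T.obj₃ ∈ w.Le k) : T.obj₂ ∈ w.Le k := by
  obtain ⟨L, R, l, r, δ, hD⟩ := w.decompAt k T.obj₂
  have h1 : T.mor₁ ≫ r = 0 := w.hom_zero (by omega) h₁ hD.2.2 _
  obtain ⟨ρ, hρ⟩ := Triangle.yoneda_exact₂ T hT r h1
  have hρ0 : ρ = 0 := w.hom_zero (by omega) h₃ hD.2.2 ρ
  have hr0 : r = 0 := by rw [hρ, hρ0, Limits.comp_zero]
  obtain ⟨s, hs⟩ := Triangle.coyoneda_exact₂ _ hD.1 (𝟙 T.obj₂)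
    (by show 𝟙 T.obj₂ ≫ r = 0; rw [hr0, Limits.comp_zero])
  exact w.mem_Le_retract hD.2.1 s l hs.symm

/-- Extension-closedness of `Ge k`. -/
lemma ge_ext {k : ℤ} {T : Triangle C} (hT : T ∈ distTriang C)
    (h₁ : T.obj₁ ∈ w.Ge k) (h₃ : T.obj₃ ∈ w.Ge k) : T.obj₂ ∈ w.Ge k := by
  obtain ⟨L, R, l, r, δ, hD⟩ := w.decompAt (k - 1) T.obj₂
  have hR : R ∈ w.Ge k := by have := hD.2.2; rwa [show k - 1 + 1 = k by ring] at this
  have h1 : l ≫ T.mor₂ = 0 := w.hom_zero (by omega) hD.2.1 h₃ _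
  obtain ⟨lam, hlam⟩ := Triangle.coyoneda_exact₂ T hT l h1
  have hlam0 : lam = 0 := w.hom_zero (by omega) hD.2.1 h₁ lam
  have hl0 : l = 0 := by rw [hlam, hlam0, Limits.zero_comp]
  obtain ⟨t, ht⟩ := Triangle.yoneda_exact₂ _ hD.1 (𝟙 T.obj₂)
    (by show l ≫ 𝟙 T.obj₂ = 0; rw [hl0, Limits.zero_comp])
  exact w.mem_Ge_retract hR r t ht.symm

/-- If `Z` receives no nonzero maps from `Le (k-1)`, then `Z ∈ Ge k`. -/
lemma mem_Ge_of_orth {k : ℤ} {Z : C}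
    (h : ∀ X : C, X ∈ w.Le (k - 1) → ∀ f : X ⟶ Z, f = 0) : Z ∈ w.Ge k := by
  obtain ⟨L, R, l, r, δ, hD⟩ := w.decompAt (k - 1) Z
  have hR : R ∈ w.Ge k := by have := hD.2.2; rwa [show k - 1 + 1 = k by ring] at this
  have hl0 : l = 0 := h L hD.2.1 l
  obtain ⟨t, ht⟩ := Triangle.yoneda_exact₂ _ hD.1 (𝟙 Z)
    (by show l ≫ 𝟙 Z = 0; rw [hl0, Limits.zero_comp])
  exact w.mem_Ge_retract hR r t ht.symm

lemma mem_Le_zero_iff {X : C} : X ∈ w.Le 0 ↔ X ∈ w.le := by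
  constructor
  · intro h; exact w.le_iso ((shiftFunctorZero' C (-(0:ℤ)) neg_zero).app X) h
  · intro h; exact w.le_iso ((shiftFunctorZero' C (-(0:ℤ)) neg_zero).symm.app X) h

lemma mem_Ge_zero_iff {X : C} : X ∈ w.Ge 0 ↔ X ∈ w.ge := by
  constructor
  · intro h; exact w.ge_iso ((shiftFunctorZero' C (-(0:ℤ)) neg_zero).app X) h
  · intro h; exact w.ge_iso ((shiftFunctorZero' C (-(0:ℤ)) neg_zero).symm.app X) h

/-- The key unconditional fact: the cone of `j ≫ a` is in `Ge m`,
where `j` is an `(m-1)`-weight truncation of `A` and `a` an `n`-weight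
truncation of `M`. -/
lemma cone_mem_Ge {m n : ℤ} (hmn : m ≤ n) {A M B A' Abar B' : C}
    {a : A ⟶ M} {b : M ⟶ B} {δ : B ⟶ A⟦(1:ℤ)⟧} (hT1 : w.IsWeightDecomp n a b δ)
    {j : A' ⟶ A} {p : A ⟶ Abar} {ε : Abar ⟶ A'⟦(1:ℤ)⟧} (hTj : w.IsWeightDecomp (m-1) j p ε)
    {b' : M ⟶ B'} {δ' : B' ⟶ A'⟦(1:ℤ)⟧}
    (hT2 : Triangle.mk (j ≫ a) b' δ' ∈ distTriang C) : B' ∈ w.Ge m := by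
  have hAbar : Abar ∈ w.Ge m := by
    have := hTj.2.2; rwa [show m - 1 + 1 = m by ring] at this
  apply w.mem_Ge_of_orth
  intro X hX φ
  have s1 : (φ ≫ δ') ≫ (j ≫ a)⟦(1:ℤ)⟧' = 0 := by
    have h31 := comp_distTriang_mor_zero₃₁ _ hT2
    change δ' ≫ (j ≫ a)⟦(1:ℤ)⟧' = 0 at h31
    rw [Category.assoc, h31, Limits.comp_zero]
  have s1' : ((φ ≫ δ') ≫ j⟦(1:ℤ)⟧') ≫ a⟦(1:ℤ)⟧' = 0 := by
    rw [Category.assoc, ← CategoryTheory.Functor.map_comp]; exact s1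
  obtain ⟨χ, hχ⟩ := Triangle.coyoneda_exact₃ _ (rot_of_distTriang _ hT1.1)
      ((φ ≫ δ') ≫ j⟦(1:ℤ)⟧')
      (by show ((φ ≫ δ') ≫ j⟦(1:ℤ)⟧') ≫ (-a⟦(1:ℤ)⟧') = 0; rw [Preadditive.comp_neg, s1', neg_zero])
  have hχ0 : χ = 0 := w.hom_zero (by omega) hX hT1.2.2 χ
  have s2 : (φ ≫ δ') ≫ j⟦(1:ℤ)⟧' = 0 := by rw [hχ0, Limits.zero_comp] at hχ; exact hχ
  obtain ⟨ζ, hζ⟩ := Triangle.coyoneda_exact₃ _ (rot_of_distTriang _ hTj.1) (φ ≫ δ')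
      (by show (φ ≫ δ') ≫ (-j⟦(1:ℤ)⟧') = 0; rw [Preadditive.comp_neg, s2, neg_zero])
  have hζ0 : ζ = 0 := w.hom_zero (by omega) hX hAbar ζ
  have s3 : φ ≫ δ' = 0 := by rw [hζ0, Limits.zero_comp] at hζ; exact hζ
  obtain ⟨μ, hμ⟩ := Triangle.coyoneda_exact₃ _ hT2 φ s3
  have hμb : μ ≫ b = 0 := w.hom_zero (by omega) hX hT1.2.2 _
  obtain ⟨ν, hν⟩ := Triangle.coyoneda_exact₂ _ hT1.1 μ hμb
  have hνp : ν ≫ p = 0 := w.hom_zero (by omega) hX hAbar _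
  obtain ⟨ω, hω⟩ := Triangle.coyoneda_exact₂ _ hTj.1 ν hνp
  have h12 : j ≫ a ≫ b' = 0 := by
    have := comp_distTriang_mor_zero₁₂ _ hT2
    change (j ≫ a) ≫ b' = 0 at this
    rw [← Category.assoc]; exact this
  rw [hμ, hν, hω]
  show ((ω ≫ j) ≫ a) ≫ b' = 0
  rw [Category.assoc]
  exact (Category.assoc ω j (a ≫ b')).trans ((congrArg (fun t => ω ≫ t) h12).trans Limits.comp_zero)

lemma tri_coyoneda₂ {X Y Z : C} {f : X ⟶ Y} {g : Y ⟶ Z} {dl : Z ⟶ X⟦(1:ℤ)⟧}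
    (hT : Triangle.mk f g dl ∈ distTriang C) {W : C} (φ : W ⟶ Y) (hφ : φ ≫ g = 0) :
    ∃ ψ : W ⟶ X, φ = ψ ≫ f :=
  Triangle.coyoneda_exact₂ _ hT φ hφ

lemma tri_yoneda₂ {X Y Z : C} {f : X ⟶ Y} {g : Y ⟶ Z} {dl : Z ⟶ X⟦(1:ℤ)⟧}
    (hT : Triangle.mk f g dl ∈ distTriang C) {W : C} (φ : Y ⟶ W) (hφ : f ≫ φ = 0) :
    ∃ ψ : Z ⟶ W, φ = g ≫ ψ :=
  Triangle.yoneda_exact₂ _ hT φ hφ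

lemma tri_yoneda₃ {X Y Z : C} {f : X ⟶ Y} {g : Y ⟶ Z} {dl : Z ⟶ X⟦(1:ℤ)⟧}
    (hT : Triangle.mk f g dl ∈ distTriang C) {W : C} (φ : Z ⟶ W) (hφ : g ≫ φ = 0) :
    ∃ ψ : X⟦(1:ℤ)⟧ ⟶ W, φ = dl ≫ ψ :=
  Triangle.yoneda_exact₃ _ hT φ hφ

end Basic









lemma comp_iso_hom_eq_zero {E : Type*} [Category E] [Preadditive E] {X Y W : E} (e : X ≅ Y)
    {f : W ⟶ X} (h : f ≫ e.hom = 0) : f = 0 := by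
  have h2 : (f ≫ e.hom) ≫ e.inv = 0 ≫ e.inv := by rw [h]
  simpa using h2

section TwoCategories

variable {C : Type*} [Category C] [Preadditive C] [HasZeroObject C]
  [HasShift C ℤ] [∀ n : ℤ, (CategoryTheory.shiftFunctor C n).Additive] [Pretriangulated C]
  {D : Type*} [Category D] [Preadditive D] [HasZeroObject D]
  [HasShift D ℤ] [∀ n : ℤ, (CategoryTheory.shiftFunctor D n).Additive] [Pretriangulated D]
  (w : WeightStructure C) (w' : WeightStructure D)
  (F : C ⥤ D) [F.CommShift ℤ] [F.IsTriangulated]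

lemma map_mem_Le (hle : ∀ X ∈ w.le, F.obj X ∈ w'.le) {k : ℤ} {X : C} (h : X ∈ w.Le k) :
    F.obj X ∈ w'.Le k :=
  w'.le_iso ((F.commShiftIso (-k)).app X) (hle _ h)

lemma map_mem_Ge (hge : ∀ X ∈ w.ge, F.obj X ∈ w'.ge) {k : ℤ} {X : C} (h : X ∈ w.Ge k) :
    F.obj X ∈ w'.Ge k :=
  w'.ge_iso ((F.commShiftIso (-k)).app X) (hge _ h)

/-- Fullness of the heart functor, propagated to all shifted hearts. -/
lemma fullAt
    (hfull : ∀ X Y : C, X ∈ w.Le 0 ∩ w.Ge 0 → Y ∈ w.Le 0 ∩ w.Ge 0 →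
      ∀ q : F.obj X ⟶ F.obj Y, ∃ p : X ⟶ Y, F.map p = q)
    (k : ℤ) {X Y : C} (hX1 : X ∈ w.Le k) (hX2 : X ∈ w.Ge k)
    (hY1 : Y ∈ w.Le k) (hY2 : Y ∈ w.Ge k)
    (q : F.obj X ⟶ F.obj Y) : ∃ p : X ⟶ Y, F.map p = q := by
  have hX' : X⟦-k⟧ ∈ w.Le 0 ∩ w.Ge 0 := ⟨w.mem_Le_zero_iff.mpr hX1, w.mem_Ge_zero_iff.mpr hX2⟩
  have hY' : Y⟦-k⟧ ∈ w.Le 0 ∩ w.Ge 0 := ⟨w.mem_Le_zero_iff.mpr hY1, w.mem_Ge_zero_iff.mpr hY2⟩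
  obtain ⟨p', hp'⟩ := hfull _ _ hX' hY'
    ((F.commShiftIso (-k)).hom.app X ≫ q⟦-k⟧' ≫ (F.commShiftIso (-k)).inv.app Y)
  obtain ⟨p, hp⟩ := (shiftFunctor C (-k)).map_surjective p'
  refine ⟨p, (shiftFunctor D (-k)).map_injective ?_⟩
  have nat := F.commShiftIso_hom_naturality p (-k)
  calc (shiftFunctor D (-k)).map (F.map p)
      = (F.commShiftIso (-k)).inv.app X ≫
          ((F.commShiftIso (-k)).hom.app X ≫ (F.map p)⟦-k⟧') := by simp
    _ = (F.commShiftIso (-k)).inv.app X ≫ (F.map (p⟦-k⟧') ≫ (F.commShiftIso (-k)).hom.app Y) := by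
          rw [← nat]
    _ = (F.commShiftIso (-k)).inv.app X ≫ (F.map p' ≫ (F.commShiftIso (-k)).hom.app Y) := by
          rw [hp]
    _ = (F.commShiftIso (-k)).inv.app X ≫
          (((F.commShiftIso (-k)).hom.app X ≫ q⟦-k⟧' ≫ (F.commShiftIso (-k)).inv.app Y) ≫
            (F.commShiftIso (-k)).hom.app Y) := by rw [hp']
    _ = (shiftFunctor D (-k)).map q := by simp

/-- Nilpotency detection, propagated to all shifted hearts. -/
lemma nilpAt
    (hnilp : ∀ X : C, X ∈ w.Le 0 ∩ w.Ge 0 → ∀ e : X ⟶ X, F.map e = 0 →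
      ∃ k : ℕ, compPow e (k + 1) = 0)
    (k : ℤ) {X : C} (hX1 : X ∈ w.Le k) (hX2 : X ∈ w.Ge k)
    (e : X ⟶ X) (he : F.map e = 0) : ∃ N : ℕ, compPow e (N + 1) = 0 := by
  have hX' : X⟦-k⟧ ∈ w.Le 0 ∩ w.Ge 0 := ⟨w.mem_Le_zero_iff.mpr hX1, w.mem_Ge_zero_iff.mpr hX2⟩
  have he' : F.map (e⟦-k⟧') = 0 := by
    have nat := F.commShiftIso_hom_naturality e (-k)
    rw [he, CategoryTheory.Functor.map_zero, Limits.comp_zero] at nat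
    exact comp_iso_hom_eq_zero ((F.commShiftIso (-k)).app X) nat
  obtain ⟨N, hN⟩ := hnilp _ hX' _ he'
  refine ⟨N, (shiftFunctor C (-k)).map_injective ?_⟩
  rw [compPow_map, hN, CategoryTheory.Functor.map_zero]

/-- Nilpotency detection for endomorphisms of objects with weights in `[mm, mm+d]`. -/
lemma nil_range
    (hle : ∀ X ∈ w.le, F.obj X ∈ w'.le) (hge : ∀ X ∈ w.ge, F.obj X ∈ w'.ge)
    (hfull : ∀ X Y : C, X ∈ w.Le 0 ∩ w.Ge 0 → Y ∈ w.Le 0 ∩ w.Ge 0 →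
      ∀ q : F.obj X ⟶ F.obj Y, ∃ p : X ⟶ Y, F.map p = q)
    (hnilp : ∀ X : C, X ∈ w.Le 0 ∩ w.Ge 0 → ∀ e : X ⟶ X, F.map e = 0 →
      ∃ k : ℕ, compPow e (k + 1) = 0) :
    ∀ (d : ℕ) (mm : ℤ) (V : C), V ∈ w.Le (mm + d) → V ∈ w.Ge mm →
      ∀ e : V ⟶ V, F.map e = 0 → ∃ N : ℕ, compPow e (N + 1) = 0 := by
  intro d
  induction d with
  | zero =>
      intro mm V h1 h2 e he
      exact w.nilpAt F hnilp mm (by simpa using h1) h2 e he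
  | succ d ih =>
      intro mm V h1 h2 e he
      have h1' : V ∈ w.Le (mm + d + 1) := by
        have : (mm + ((d + 1 : ℕ) : ℤ)) = mm + d + 1 := by push_cast; ring
        rwa [this] at h1
      -- truncate V at level (mm + d)
      obtain ⟨V', Vbar, ι, π, dl, hTV⟩ := w.decompAt (mm + d) V
      have hVbar_ge : Vbar ∈ w.Ge (mm + d + 1) := hTV.2.2
      have hVbar_le : Vbar ∈ w.Le (mm + d + 1) := by
        apply w.le_ext (rot_of_distTriang _ hTV.1)
        · exact w.Le_mono (by omega) h1'
        · exact w.mem_Le_shift hTV.2.1 1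
      have hV'_le : V' ∈ w.Le (mm + d) := hTV.2.1
      have hV'_ge : V' ∈ w.Ge mm := by
        apply w.ge_ext (inv_rot_of_distTriang _ hTV.1)
        · exact w.Ge_antimono (by omega) (w.mem_Ge_shift hVbar_ge (-1))
        · exact h2
      -- induced endomorphism on the top quotient
      have hιeπ : ι ≫ e ≫ π = 0 := by
        rw [← Category.assoc]
        exact w.hom_zero (by omega) hV'_le hVbar_ge _
      obtain ⟨ebar, hebar⟩ : ∃ ebar : Vbar ⟶ Vbar, e ≫ π = π ≫ ebar := Triangle.yoneda_exact₂ _ hTV.1 (e ≫ π) hιeπ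
      change e ≫ π = π ≫ ebar at hebar
      -- hebar : e ≫ π = π ≫ ebar
      have hFπ : F.map π ≫ F.map ebar = 0 := by
        rw [← F.map_comp, ← hebar, F.map_comp, he, Limits.zero_comp]
      obtain ⟨y, hy⟩ : ∃ y : (F.obj V')⟦(1:ℤ)⟧ ⟶ F.obj Vbar,
          F.map ebar = (F.map dl ≫ (F.commShiftIso (1:ℤ)).hom.app V') ≫ y :=
        Triangle.yoneda_exact₃ _ (F.map_distinguished _ hTV.1) (F.map ebar)
        (by exact hFπ)
      -- hy : F.map ebar = (F.map dl ≫ (F.commShiftIso 1).hom.app V') ≫ y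
      set y₀ : F.obj (V'⟦(1:ℤ)⟧) ⟶ F.obj Vbar := (F.commShiftIso (1:ℤ)).hom.app V' ≫ y with hy₀
      -- truncate V'⟦1⟧ at level (mm + d)
      obtain ⟨V'', Zbar, ι', p', dl', hTV'⟩ := w.decompAt (mm + d) (V'⟦(1:ℤ)⟧)
      have hZbar_ge : Zbar ∈ w.Ge (mm + d + 1) := hTV'.2.2
      have hZbar_le : Zbar ∈ w.Le (mm + d + 1) := by
        apply w.le_ext (rot_of_distTriang _ hTV'.1)
        · exact w.mem_Le_shift hV'_le 1
        · exact w.mem_Le_shift (w.Le_mono (by omega) hTV'.2.1) 1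
      have hkill : F.map ι' ≫ y₀ = 0 :=
        w'.hom_zero (by omega) (w.map_mem_Le w' F hle hTV'.2.1) (w.map_mem_Ge w' F hge hVbar_ge) _
      obtain ⟨yh, hyh⟩ : ∃ yh : F.obj Zbar ⟶ F.obj Vbar, y₀ = F.map p' ≫ yh :=
        Triangle.yoneda_exact₂ _ (F.map_distinguished _ hTV'.1) y₀
        (by exact hkill)
      -- hyh : y₀ = F.map p' ≫ yh
      obtain ⟨g, hg⟩ := w.fullAt F hfull (mm + d + 1) hZbar_le hZbar_ge hVbar_le hVbar_ge yh
      set et : Vbar ⟶ Vbar := (show Vbar ⟶ Vbar from ebar) - (dl ≫ p') ≫ g with het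
      have h2 : F.map ((dl ≫ p') ≫ g) = F.map ebar := by
        rw [hy, CategoryTheory.Functor.map_comp, CategoryTheory.Functor.map_comp, hg]
        simp only [Category.assoc]
        rw [← hyh, hy₀]
      have hFet : F.map et = 0 := by
        rw [het, CategoryTheory.Functor.map_sub, h2, sub_self]
      obtain ⟨K0, hK0⟩ := w.nilpAt F hnilp (mm + d + 1) hVbar_le hVbar_ge et hFet
      -- π ≫ et = e ≫ π
      have hπet : π ≫ et = e ≫ π := by
        have hπdl : π ≫ dl = 0 := by
          have := comp_distTriang_mor_zero₂₃ _ hTV.1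
          exact this
        have hz : π ≫ (dl ≫ p') ≫ g = 0 := by
          rw [← Category.assoc, ← Category.assoc, hπdl, Limits.zero_comp, Limits.zero_comp]
        rw [het, Preadditive.comp_sub, hz, sub_zero]
        exact hebar.symm
      have hpow : ∀ i : ℕ, compPow e i ≫ π = π ≫ compPow et i := by
        intro i
        induction i with
        | zero => simp [compPow]
        | succ i ihh =>
            rw [compPow_succ', compPow_succ', Category.assoc, ← hπet,
              ← Category.assoc, ihh, Category.assoc]
      have hzero : compPow e (K0 + 1) ≫ π = 0 := by rw [hpow, hK0, Limits.comp_zero]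
      obtain ⟨u, hu⟩ : ∃ u : V ⟶ V', compPow e (K0 + 1) = u ≫ ι :=
        Triangle.coyoneda_exact₂ _ hTV.1 (compPow e (K0 + 1)) hzero
      -- hu : compPow e (K0+1) = u ≫ ι
      have hFu : F.map (u ≫ ι) = 0 := by
        rw [← hu, compPow_map, he, compPow_zero_mor]
      set e1 : V' ⟶ V' := ι ≫ (show V ⟶ V' from u) with he1
      have hFe1 : F.map (e1 ≫ e1) = 0 := by
        have hsplit : e1 ≫ e1 = ι ≫ (u ≫ ι) ≫ u := by
          rw [he1]; simp only [Category.assoc]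
        rw [hsplit, CategoryTheory.Functor.map_comp, CategoryTheory.Functor.map_comp, hFu]
        simp
      obtain ⟨N', hN'⟩ := ih mm V' hV'_le hV'_ge (e1 ≫ e1) hFe1
      have he1pow : compPow e1 (2 * (N' + 1)) = 0 := by
        rw [compPow_two_mul, hN']
      -- e^{(K0+1)(i+1)} = u ≫ compPow e1 i ≫ ι
      have hiter : ∀ i : ℕ, compPow e ((K0 + 1) * (i + 1)) = u ≫ compPow e1 i ≫ ι := by
        intro i
        induction i with
        | zero => simpa [compPow] using hu
        | succ i ihh =>
            have hsplit : (K0 + 1) * (i + 1 + 1) = (K0 + 1) * (i + 1) + (K0 + 1) := by ring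
            rw [hsplit, compPow_add, ihh, hu, compPow_succ', he1]
            simp only [Category.assoc]
      refine ⟨(K0 + 1) * (2 * (N' + 1) + 1) - 1, ?_⟩
      have hpos : (K0 + 1) * (2 * (N' + 1) + 1) - 1 + 1 = (K0 + 1) * (2 * (N' + 1) + 1) := by
        have : 1 ≤ (K0 + 1) * (2 * (N' + 1) + 1) := Nat.one_le_iff_ne_zero.mpr (by positivity)
        omega
      rw [hpos, hiter (2 * (N' + 1)), he1pow]
      simp

end TwoCategories

end WeightStructure

/-- conservativity of weight-exact functors with respect to objects
without weights `m,…,n`. -/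
theorem withoutWeights_of_map {C : Type*} [Category C] [Preadditive C] [HasZeroObject C]
    [HasShift C ℤ] [∀ n : ℤ, (CategoryTheory.shiftFunctor C n).Additive] [Pretriangulated C]
    {D : Type*} [Category D] [Preadditive D] [HasZeroObject D]
    [HasShift D ℤ] [∀ n : ℤ, (CategoryTheory.shiftFunctor D n).Additive] [Pretriangulated D]
    (w : WeightStructure C) (w' : WeightStructure D)
    (F : C ⥤ D) [F.CommShift ℤ] [F.IsTriangulated]
    -- `F` is weight-exact
    (hle : ∀ X ∈ w.le, F.obj X ∈ w'.le) (hge : ∀ X ∈ w.ge, F.obj X ∈ w'.ge)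
    -- the induced functor on hearts is full
    (hfull : ∀ X Y : C, X ∈ w.Le 0 ∩ w.Ge 0 → Y ∈ w.Le 0 ∩ w.Ge 0 →
      ∀ q : F.obj X ⟶ F.obj Y, ∃ p : X ⟶ Y, F.map p = q)
    -- endomorphisms in the heart killed by the induced functor are nilpotent
    (hnilp : ∀ X : C, X ∈ w.Le 0 ∩ w.Ge 0 → ∀ e : X ⟶ X, F.map e = 0 →
      ∃ k : ℕ, compPow e (k + 1) = 0)
    (m n : ℤ) (hmn : m ≤ n) (M : C)
    (hFM : w'.WithoutWeights m n (F.obj M)) :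
    w.WithoutWeights m n M := by
  classical
  obtain ⟨P, Q, P', Q', α, β, δD, α', β', δD', hD1, hD2, hz⟩ := hFM
  have hz' : α ≫ β' = 0 := by
    have := hz
    rwa [Category.id_comp] at this
  -- C-side constructions
  obtain ⟨A, B, a, b, δ, hT1⟩ := w.decompAt n M
  obtain ⟨A', Abar, j, p, ε, hTj⟩ := w.decompAt (m - 1) A
  have hA_le : A ∈ w.Le n := hT1.2.1
  have hB_ge : B ∈ w.Ge (n + 1) := hT1.2.2
  have hA'_le : A' ∈ w.Le (m - 1) := hTj.2.1
  have hAbar_ge : Abar ∈ w.Ge m := by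
    have := hTj.2.2; rwa [show m - 1 + 1 = m by ring] at this
  have hA'1_le_m : (A'⟦(1:ℤ)⟧ : C) ∈ w.Le m := by
    have := w.mem_Le_shift hA'_le 1; rwa [show m - 1 + 1 = m by ring] at this
  have hAbar_le : Abar ∈ w.Le n := by
    apply w.le_ext (rot_of_distTriang _ hTj.1)
    · exact hA_le
    · exact w.Le_mono hmn hA'1_le_m
  obtain ⟨B'0, b'0, δ'0, hT2⟩ := Pretriangulated.distinguished_cocone_triangle (j ≫ a)
  have hB'0_ge : B'0 ∈ w.Ge m := w.cone_mem_Ge hmn hT1 hTj hT2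
  -- the comparison map fh : Abar ⟶ B'0 with p ≫ fh = a ≫ b'0
  have hjab : j ≫ (a ≫ b'0) = 0 := by
    have h0 := comp_distTriang_mor_zero₁₂ _ hT2
    change (j ≫ a) ≫ b'0 = 0 at h0
    rw [← Category.assoc]; exact h0
  obtain ⟨fh, hfh⟩ : ∃ fh : Abar ⟶ B'0, a ≫ b'0 = p ≫ fh :=
    WeightStructure.tri_yoneda₂ hTj.1 (a ≫ b'0) hjab
  -- D-side memberships
  have FA_le : F.obj A ∈ w'.Le n := w.map_mem_Le w' F hle hA_le
  have FB_ge : F.obj B ∈ w'.Ge (n + 1) := w.map_mem_Ge w' F hge hB_ge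
  have FA'_le : F.obj A' ∈ w'.Le (m - 1) := w.map_mem_Le w' F hle hA'_le
  have FB'0_ge : F.obj B'0 ∈ w'.Ge m := w.map_mem_Ge w' F hge hB'0_ge
  have FAbar_ge : F.obj Abar ∈ w'.Ge m := w.map_mem_Ge w' F hge hAbar_ge
  have FAbar_le : F.obj Abar ∈ w'.Le n := w.map_mem_Le w' F hle hAbar_le
  -- independence: F.map a ≫ F.map b'0 = 0
  have step9 : F.map a ≫ β = 0 := w'.hom_zero (by omega) FA_le hD1.2.2 _
  obtain ⟨φ₁, hφ₁⟩ : ∃ φ₁ : F.obj A ⟶ P, F.map a = φ₁ ≫ α :=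
    WeightStructure.tri_coyoneda₂ hD1.1 (F.map a) step9
  have step10 : F.map a ≫ β' = 0 := by
    rw [hφ₁, Category.assoc, hz', Limits.comp_zero]
  obtain ⟨φ₂, hφ₂⟩ : ∃ φ₂ : F.obj A ⟶ P', F.map a = φ₂ ≫ α' :=
    WeightStructure.tri_coyoneda₂ hD2.1 (F.map a) step10
  have hDh : F.map a ≫ F.map b'0 = 0 := by
    rw [hφ₂, Category.assoc]
    have h0 : α' ≫ F.map b'0 = 0 := w'.hom_zero (by omega) hD2.2.1 FB'0_ge _
    rw [h0, Limits.comp_zero]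
  -- lift F.map a through F.map (j ≫ a)
  obtain ⟨αD, hαD⟩ : ∃ αD : F.obj A ⟶ F.obj A', F.map a = αD ≫ F.map (j ≫ a) :=
    WeightStructure.tri_coyoneda₂ (F.map_distinguished _ hT2) (F.map a) hDh
  set z : F.obj A ⟶ F.obj A := 𝟙 (F.obj A) - αD ≫ F.map j with hzdef
  have hza : z ≫ F.map a = 0 := by
    rw [hzdef, Preadditive.sub_comp, Category.id_comp, Category.assoc,
      ← CategoryTheory.Functor.map_comp, ← hαD, sub_self]
  -- factor z through F.obj (B⟦-1⟧)
  have hTinv : (Triangle.mk a b δ).invRotate ∈ distTriang C := inv_rot_of_distTriang _ hT1.1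
  obtain ⟨yD, hyD⟩ : ∃ yD : F.obj A ⟶ F.obj (B⟦(-1:ℤ)⟧),
      z = yD ≫ F.map ((Triangle.mk a b δ).invRotate.mor₁) :=
    WeightStructure.tri_coyoneda₂ (F.map_distinguished _ hTinv) z hza
  set dm : (B⟦(-1:ℤ)⟧ : C) ⟶ A := (Triangle.mk a b δ).invRotate.mor₁ with hdm
  have hdma : dm ≫ a = 0 := comp_distTriang_mor_zero₁₂ _ hTinv
  set ν : (B⟦(-1:ℤ)⟧ : C) ⟶ Abar := dm ≫ p with hν
  have hjp : j ≫ p = 0 := comp_distTriang_mor_zero₁₂ _ hTj.1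
  have hFp : F.map p = yD ≫ F.map ν := by
    have h1 : F.map p = z ≫ F.map p + (αD ≫ F.map j) ≫ F.map p := by
      rw [hzdef, Preadditive.sub_comp, Category.id_comp]
      abel
    rw [h1, Category.assoc, ← CategoryTheory.Functor.map_comp, hjp,
      CategoryTheory.Functor.map_zero, Limits.comp_zero, add_zero, hyD]
    exact (Category.assoc yD (F.map dm) (F.map p)).trans
      (congrArg (fun t => yD ≫ t) (F.map_comp dm p).symm)
  -- B⟦-1⟧ ∈ Ge n
  have hBm1_ge : (B⟦(-1:ℤ)⟧ : C) ∈ w.Ge n := by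
    have h0 := w.mem_Ge_shift hB_ge (-1); rwa [show n + 1 + (-1) = n by ring] at h0
  have FBm1_ge : F.obj (B⟦(-1:ℤ)⟧) ∈ w'.Ge n := w.map_mem_Ge w' F hge hBm1_ge
  have hjyD : F.map j ≫ yD = 0 := w'.hom_zero (by omega) FA'_le FBm1_ge _
  obtain ⟨wD, hwD⟩ : ∃ wD : F.obj Abar ⟶ F.obj (B⟦(-1:ℤ)⟧), yD = F.map p ≫ wD :=
    WeightStructure.tri_yoneda₂ (F.map_distinguished _ hTj.1) yD hjyD
  set x : F.obj Abar ⟶ F.obj Abar := 𝟙 (F.obj Abar) - wD ≫ F.map ν with hxdef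
  have hpx : F.map p ≫ x = 0 := by
    rw [hxdef, Preadditive.comp_sub, Category.comp_id, ← Category.assoc, ← hwD, ← hFp, sub_self]
  obtain ⟨sD, hsD⟩ : ∃ sD : (F.obj A')⟦(1:ℤ)⟧ ⟶ F.obj Abar,
      x = (F.map ε ≫ (F.commShiftIso (1:ℤ)).hom.app A') ≫ sD :=
    WeightStructure.tri_yoneda₃ (F.map_distinguished _ hTj.1) x hpx
  set st : F.obj (A'⟦(1:ℤ)⟧) ⟶ F.obj Abar := (F.commShiftIso (1:ℤ)).hom.app A' ≫ sD with hst
  have eq1 : 𝟙 (F.obj Abar) = F.map ε ≫ st + wD ≫ F.map ν := by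
    have h0 : x = F.map ε ≫ st := by rw [hsD, hst, Category.assoc]
    rw [← h0, hxdef]
    abel
  -- heart truncation of A'⟦1⟧ at level m-1
  obtain ⟨A₆, Z₆, ι₆, p₆, δ₆, hT₆⟩ := w.decompAt (m - 1) (A'⟦(1:ℤ)⟧)
  have hZ₆_ge : Z₆ ∈ w.Ge m := by
    have h0 := hT₆.2.2; rwa [show m - 1 + 1 = m by ring] at h0
  have hZ₆_le : Z₆ ∈ w.Le m := by
    apply w.le_ext (rot_of_distTriang _ hT₆.1)
    · exact hA'1_le_m
    · have h0 := w.mem_Le_shift hT₆.2.1 1; rwa [show m - 1 + 1 = m by ring] at h0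
  have hkill₆ : F.map ι₆ ≫ st = 0 :=
    w'.hom_zero (by omega) (w.map_mem_Le w' F hle hT₆.2.1) FAbar_ge _
  obtain ⟨S₁, hS₁⟩ : ∃ S₁ : F.obj Z₆ ⟶ F.obj Abar, st = F.map p₆ ≫ S₁ :=
    WeightStructure.tri_yoneda₂ (F.map_distinguished _ hT₆.1) st hkill₆
  -- truncation of Abar at level m
  obtain ⟨lowA, hiA, u₇, v₇, δ₇, hT₇⟩ := w.decompAt m Abar
  have hlowA_le : lowA ∈ w.Le m := hT₇.2.1
  have hlowA_ge : lowA ∈ w.Ge m := by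
    apply w.ge_ext (inv_rot_of_distTriang _ hT₇.1)
    · have h0 := w.mem_Ge_shift hT₇.2.2 (-1)
      have h2 : (hiA⟦(-1:ℤ)⟧ : C) ∈ w.Ge m := by
        rwa [show m + 1 + (-1) = m by ring] at h0
      exact h2
    · exact hAbar_ge
  have hkill₇ : S₁ ≫ F.map v₇ = 0 :=
    w'.hom_zero (by omega) (w.map_mem_Le w' F hle hZ₆_le)
      (w.map_mem_Ge w' F hge hT₇.2.2) _
  obtain ⟨Sh, hSh⟩ : ∃ Sh : F.obj Z₆ ⟶ F.obj lowA, S₁ = Sh ≫ F.map u₇ :=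
    WeightStructure.tri_coyoneda₂ (F.map_distinguished _ hT₇.1) S₁ hkill₇
  obtain ⟨g₀, hg₀⟩ := w.fullAt F hfull m hZ₆_le hZ₆_ge hlowA_le hlowA_ge Sh
  set uh : Abar ⟶ Abar := ε ≫ p₆ ≫ g₀ ≫ u₇ with huh
  have hFuh : F.map uh = F.map ε ≫ st := by
    rw [hS₁, hSh, ← hg₀, huh]
    simp only [CategoryTheory.Functor.map_comp, Category.assoc]
  -- truncation of B⟦-1⟧ at level n
  obtain ⟨Y₆, V₆, q₆, r₆, δ₈, hT₈⟩ := w.decompAt n (B⟦(-1:ℤ)⟧)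
  have hY₆_le : Y₆ ∈ w.Le n := hT₈.2.1
  have hY₆_ge : Y₆ ∈ w.Ge n := by
    apply w.ge_ext (inv_rot_of_distTriang _ hT₈.1)
    · have h0 := w.mem_Ge_shift hT₈.2.2 (-1)
      have h2 : (V₆⟦(-1:ℤ)⟧ : C) ∈ w.Ge n := by
        rwa [show n + 1 + (-1) = n by ring] at h0
      exact h2
    · exact hBm1_ge
  have hkill₈ : wD ≫ F.map r₆ = 0 :=
    w'.hom_zero (by omega) FAbar_le (w.map_mem_Ge w' F hge hT₈.2.2) _
  obtain ⟨W₁, hW₁⟩ : ∃ W₁ : F.obj Abar ⟶ F.obj Y₆, wD = W₁ ≫ F.map q₆ :=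
    WeightStructure.tri_coyoneda₂ (F.map_distinguished _ hT₈.1) wD hkill₈
  -- truncation of Abar at level n-1
  obtain ⟨loA2, hiA2, u₈, v₈, δ₉, hT₉⟩ := w.decompAt (n - 1) Abar
  have hhiA2_ge : hiA2 ∈ w.Ge n := by
    have h0 := hT₉.2.2; rwa [show n - 1 + 1 = n by ring] at h0
  have hhiA2_le : hiA2 ∈ w.Le n := by
    apply w.le_ext (rot_of_distTriang _ hT₉.1)
    · exact hAbar_le
    · have h0 := w.mem_Le_shift hT₉.2.1 1; rwa [show n - 1 + 1 = n by ring] at h0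
  have hkill₉ : F.map u₈ ≫ W₁ = 0 :=
    w'.hom_zero (by omega) (w.map_mem_Le w' F hle hT₉.2.1)
      (w.map_mem_Ge w' F hge hY₆_ge) _
  obtain ⟨Wh, hWh⟩ : ∃ Wh : F.obj hiA2 ⟶ F.obj Y₆, W₁ = F.map v₈ ≫ Wh :=
    WeightStructure.tri_yoneda₂ (F.map_distinguished _ hT₉.1) W₁ hkill₉
  obtain ⟨g₁, hg₁⟩ := w.fullAt F hfull n hhiA2_le hhiA2_ge hY₆_le hY₆_ge Wh
  set vh : Abar ⟶ Abar := v₈ ≫ g₁ ≫ q₆ ≫ ν with hvh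
  have hFvh : F.map vh = wD ≫ F.map ν := by
    rw [hW₁, hWh, ← hg₁, hvh]
    simp only [CategoryTheory.Functor.map_comp, Category.assoc]
  -- the error term
  set nh : Abar ⟶ Abar := 𝟙 Abar - uh - vh with hnh
  have hFnh : F.map nh = 0 := by
    rw [hnh, CategoryTheory.Functor.map_sub, CategoryTheory.Functor.map_sub,
      CategoryTheory.Functor.map_id, hFuh, hFvh, eq1]
    abel
  -- nilpotency of nh
  have hAbar_le' : Abar ∈ w.Le (m + ((n - m).toNat : ℤ)) := by
    have h0 : ((n - m).toNat : ℤ) = n - m := Int.toNat_of_nonneg (by omega)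
    rw [h0, show m + (n - m) = n by ring]
    exact hAbar_le
  obtain ⟨N, hN⟩ := w.nil_range w' F hle hge hfull hnilp (n - m).toNat m Abar
    hAbar_le' hAbar_ge nh hFnh
  -- C-side relations
  have hpε : p ≫ ε = 0 := comp_distTriang_mor_zero₂₃ _ hTj.1
  have hpuh : p ≫ uh = 0 := by
    rw [huh, ← Category.assoc, hpε, Limits.zero_comp]
  have hνfh : ν ≫ fh = 0 := by
    rw [hν, Category.assoc, ← hfh, ← Category.assoc, hdma, Limits.zero_comp]
  have hνε : ν ≫ ε = 0 := by
    rw [hν, Category.assoc, hpε, Limits.comp_zero]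
  have hvhfh : vh ≫ fh = 0 := by
    rw [hvh]
    simp only [Category.assoc]
    rw [hνfh]
    simp
  have hvhuh : vh ≫ uh = 0 := by
    rw [hvh, huh]
    simp only [Category.assoc]
    rw [← Category.assoc ν ε, hνε]
    simp
  -- key algebraic identities
  have K1 : nh ≫ fh = fh - uh ≫ fh := by
    rw [hnh, Preadditive.sub_comp, Preadditive.sub_comp, Category.id_comp, hvhfh, sub_zero]
  have K2 : nh ≫ uh = uh - uh ≫ uh := by
    rw [hnh, Preadditive.sub_comp, Preadditive.sub_comp, Category.id_comp, hvhuh, sub_zero]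
  -- induction: p ≫ nh^i ≫ uh = 0 and p ≫ nh^i ≫ fh = p ≫ fh
  have main : ∀ i : ℕ, (p ≫ compPow nh i ≫ uh = 0) ∧
      (p ≫ compPow nh i ≫ fh = p ≫ fh) := by
    intro i
    induction i with
    | zero =>
        constructor
        · show p ≫ 𝟙 Abar ≫ uh = 0
          rw [Category.id_comp, hpuh]
        · show p ≫ 𝟙 Abar ≫ fh = p ≫ fh
          rw [Category.id_comp]
    | succ i ihh =>
        have hsplit : ∀ (W : C) (q : Abar ⟶ W), nh ≫ q = q - uh ≫ q →
            p ≫ compPow nh (i+1) ≫ q = p ≫ compPow nh i ≫ q -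
              p ≫ compPow nh i ≫ uh ≫ q := by
          intro W q hq
          rw [compPow_succ']
          simp only [Category.assoc]
          rw [hq, Preadditive.comp_sub, Preadditive.comp_sub]
        have hzer : ∀ (W : C) (q : Abar ⟶ W), p ≫ compPow nh i ≫ uh ≫ q = 0 := by
          intro W q
          have h2 : p ≫ compPow nh i ≫ uh ≫ q = (p ≫ compPow nh i ≫ uh) ≫ q := by
            simp only [Category.assoc]
          rw [h2, ihh.1, Limits.zero_comp]
        constructor
        · rw [hsplit Abar uh K2, hzer Abar uh, sub_zero, ihh.1]
        · rw [hsplit B'0 fh K1, hzer B'0 fh, sub_zero, ihh.2]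
  -- conclude p ≫ fh = 0
  have hfinal : p ≫ fh = 0 := by
    have h0 := (main (N + 1)).2
    rw [hN, Limits.zero_comp, Limits.comp_zero] at h0
    exact h0.symm
  have hab'0 : a ≫ b'0 = 0 := by rw [hfh, hfinal]
  -- package the conclusion
  refine ⟨A, B, A', B'0, a, b, δ, j ≫ a, b'0, δ'0, hT1, ?_, ?_⟩
  · refine ⟨hT2, hA'_le, ?_⟩
    rwa [show m - 1 + 1 = m by ring]
  · rw [Category.id_comp, hab'0]
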